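/- Suppose $H, L:\mathbb{R}\times X\to X$ are maps such that: (i) for every solution $x(t)$ of the nonlinear equation $x'=A(t)x+f(t,x)$, $t\mapsto H(t,x(t))$ solves the linear equation $x'=A(t)x$; (ii) for every solution $y(t)$ of the linear equation, $t\mapsto L(t,y(t))$ solves the nonlinear equation; (iii) $\sup_{t,x}\|H(t,x)-x\|\le M$ and $\sup_{t,y}\|L(t,y)-y\|\le M$ for some $M>0$; (iv) the only bounded solution of the linear equation is $0$ (which holds under a nonuniform $(h,k,\mu,\nu)$-dichotomy). Then $H(t, L(t,y)) = y$ for all $t\in\mathbb{R}$ and $y\in X$. -/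

import Mathlib

open Filter

/-- Lemma `leabc`: if `H` maps solutions of the nonlinear equation to solutions of
the linear one, `L` the other way around, both are within distance `M` of the
identity, and `0` is the only bounded solution of the linear equation, then
`H(t, L(t,y)) = y` for all `t` and `y`. -/
theorem stmt_14 {X : Type*} [NormedAddCommGroup X] [NormedSpace ℝ X] [CompleteSpace X]
    (A : ℝ → X →L[ℝ] X) (hA : Continuous A)
    (f : ℝ → X → X) (hfcont : Continuous fun p : ℝ × X => f p.1 p.2)
    -- global existence and uniqueness of solutions of the linear equation
    (hlin_exist : ∀ (t₀ : ℝ) (y₀ : X), ∃ y : ℝ → X, y t₀ = y₀ ∧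
      ∀ t, HasDerivAt y (A t (y t)) t)
    (hlin_uniq : ∀ y z : ℝ → X, (∀ t, HasDerivAt y (A t (y t)) t) →
      (∀ t, HasDerivAt z (A t (z t)) t) → (∃ t₀, y t₀ = z t₀) → y = z)
    -- global existence and uniqueness for the nonlinear equation
    (hnl_exist : ∀ (t₀ : ℝ) (x₀ : X), ∃ x : ℝ → X, x t₀ = x₀ ∧
      ∀ t, HasDerivAt x (A t (x t) + f t (x t)) t)
    (hnl_uniq : ∀ x z : ℝ → X, (∀ t, HasDerivAt x (A t (x t) + f t (x t)) t) →
      (∀ t, HasDerivAt z (A t (z t) + f t (z t)) t) → (∃ t₀, x t₀ = z t₀) → x = z)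
    (H L : ℝ → X → X) (M : ℝ) (hM : 0 < M)
    -- (i) `H` sends solutions of the nonlinear equation to solutions of the linear one
    (hH : ∀ x : ℝ → X, (∀ t, HasDerivAt x (A t (x t) + f t (x t)) t) →
      ∀ t, HasDerivAt (fun r => H r (x r)) (A t (H t (x t))) t)
    -- (ii) `L` sends solutions of the linear equation to solutions of the nonlinear one
    (hL : ∀ y : ℝ → X, (∀ t, HasDerivAt y (A t (y t)) t) →
      ∀ t, HasDerivAt (fun r => L r (y r)) (A t (L t (y t)) + f t (L t (y t))) t)
    -- (iii) both are boundedly close to the identity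
    (hHbd : ∀ t x, ‖H t x - x‖ ≤ M) (hLbd : ∀ t y, ‖L t y - y‖ ≤ M)
    -- (iv) the only bounded solution of the linear equation is `0`
    (hbdd : ∀ z : ℝ → X, (∀ t, HasDerivAt z (A t (z t)) t) →
      (∃ C : ℝ, ∀ t, ‖z t‖ ≤ C) → ∀ t, z t = 0) :
    ∀ (t : ℝ) (y : X), H t (L t y) = y := by
  intro t₀ y₀
  obtain ⟨y, hy0, hy⟩ := hlin_exist t₀ y₀
  have hx : ∀ t, HasDerivAt (fun r => L r (y r))
      (A t (L t (y t)) + f t (L t (y t))) t := hL y hy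
  have hh : ∀ t, HasDerivAt (fun r => H r (L r (y r)))
      (A t (H t (L t (y t)))) t := hH _ hx
  set z : ℝ → X := fun r => H r (L r (y r)) - y r with hz
  have hzderiv : ∀ t, HasDerivAt z (A t (z t)) t := by
    intro t
    have := (hh t).sub (hy t)
    simpa [hz, map_sub, Pi.sub_def] using this
  have hzbd : ∃ C : ℝ, ∀ t, ‖z t‖ ≤ C := by
    refine ⟨2 * M, fun t => ?_⟩
    have h1 := hHbd t (L t (y t))
    have h2 := hLbd t (y t)
    calc ‖z t‖ = ‖(H t (L t (y t)) - L t (y t)) + (L t (y t) - y t)‖ := by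
          simp [hz]
      _ ≤ ‖H t (L t (y t)) - L t (y t)‖ + ‖L t (y t) - y t‖ := norm_add_le _ _
      _ ≤ 2 * M := by linarith
  have := hbdd z hzderiv hzbd t₀
  have : H t₀ (L t₀ (y t₀)) = y t₀ := by
    have := sub_eq_zero.mp this
    simpa [hz] using this
  rwa [hy0] at this
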